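/- Let A and C be integral domains which are unique factorization domains, and let φ : A → C be a flat ring homomorphism (C is flat as an A-module via φ). If f, g ∈ A are relatively prime, i.e. every common divisor of f and g in A is a unit, then φ(f) and φ(g) are relatively prime in C, i.e. every common divisor of φ(f) and φ(g) in C is a unit. -/

import Mathlib

open scoped TensorProduct


/-- Let `A` and `C` be unique factorization domains and `φ : A → C` a flat ring homomorphism.
If `f, g ∈ A` are relatively prime (every common divisor is a unit), then `φ f` and `φ g`
are relatively prime in `C`. -/
theorem flat_map_relatively_prime {A C : Type*}
    [CommRing A] [IsDomain A] [UniqueFactorizationMonoid A]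
    [CommRing C] [IsDomain C] [UniqueFactorizationMonoid C]
    (φ : A →+* C) (hflat : letI := φ.toModule; Module.Flat A C)
    (f g : A) (hfg : ∀ d : A, d ∣ f → d ∣ g → IsUnit d) :
    ∀ d : C, d ∣ φ f → d ∣ φ g → IsUnit d := by
  letI := φ.toModule
  haveI : Module.Flat A C := hflat
  have hsmul : ∀ (a : A) (c : C), a • c = φ a * c := fun a c => rfl
  intro d hdf hdg
  -- trivial cases where f or g is zero
  by_cases hf0 : f = 0
  · subst hf0
    have hg : IsUnit g := hfg g (dvd_zero g) dvd_rfl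
    exact isUnit_of_dvd_unit hdg (hg.map φ)
  by_cases hg0 : g = 0
  · subst hg0
    have hf : IsUnit f := hfg f dvd_rfl (dvd_zero f)
    exact isUnit_of_dvd_unit hdf (hf.map φ)
  -- scalar multiplication by `f` on `C` is injective, by flatness
  have hreg : Function.Injective (fun c : C => f • c) := by
    have hinjA : Function.Injective (LinearMap.lsmul A A f) := by
      intro x y h
      have : f * x = f * y := by simpa using h
      exact mul_left_cancel₀ hf0 this
    have hinj : Function.Injective ((LinearMap.lsmul A A f).lTensor C) :=
      Module.Flat.lTensor_preserves_injective_linearMap _ hinjA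
    intro x y h
    have h' : f • x = f • y := h
    have e1 : ((LinearMap.lsmul A A f).lTensor C) (x ⊗ₜ (1 : A))
        = ((LinearMap.lsmul A A f).lTensor C) (y ⊗ₜ (1 : A)) := by
      simp only [LinearMap.lTensor_tmul, LinearMap.lsmul_apply, smul_eq_mul, mul_one]
      calc x ⊗ₜ[A] f = (f • x) ⊗ₜ[A] (1 : A) := by
            rw [TensorProduct.smul_tmul, smul_eq_mul, mul_one]
        _ = (f • y) ⊗ₜ[A] (1 : A) := by rw [h']
        _ = y ⊗ₜ[A] f := by rw [TensorProduct.smul_tmul, smul_eq_mul, mul_one]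
    have e2 := hinj e1
    have := congrArg (TensorProduct.rid A C) e2
    simpa using this
  have hφf : φ f ≠ 0 := by
    intro h0
    have : f • (1 : C) = f • (0 : C) := by
      rw [hsmul, hsmul, mul_one, mul_zero, h0]
    exact one_ne_zero (hreg this)
  -- the Koszul-type exact sequence over A
  set k : A →ₗ[A] A × A := LinearMap.prod (g • LinearMap.id) ((-f) • LinearMap.id) with hk
  set m : A × A →ₗ[A] A := LinearMap.coprod (f • LinearMap.id) (g • LinearMap.id) with hm
  have hrel : IsRelPrime g f := fun x hx hy => hfg x hy hx
  have hexact : Function.Exact k m := by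
    intro p
    constructor
    · intro hp
      have h1 : f * p.1 + g * p.2 = 0 := by
        simpa [hm, LinearMap.coprod_apply, smul_eq_mul] using hp
      have hdvd : g ∣ p.1 := by
        refine hrel.dvd_of_dvd_mul_left ⟨-p.2, ?_⟩
        linear_combination h1
      obtain ⟨c, hc⟩ := hdvd
      refine ⟨c, ?_⟩
      have h2 : g * (f * c + p.2) = 0 := by
        rw [hc] at h1; linear_combination h1
      have h3 : p.2 = -(f * c) := by
        rcases mul_eq_zero.mp h2 with h | h
        · exact absurd h hg0
        · linear_combination h
      ext
      · simp [hk, hc, mul_comm]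
      · simp [hk, h3, mul_comm]
    · rintro ⟨c, rfl⟩
      simp [hk, hm, smul_eq_mul]
      ring
  -- tensor with C
  have hexactC : Function.Exact (k.lTensor C) (m.lTensor C) :=
    Module.Flat.lTensor_exact C hexact
  obtain ⟨a, ha⟩ := hdf
  obtain ⟨b, hb⟩ := hdg
  set t : C ⊗[A] (A × A) := b ⊗ₜ ((1 : A), (0 : A)) + (-a) ⊗ₜ ((0 : A), (1 : A)) with hts
  have ht : (m.lTensor C) t = 0 := by
    have : (TensorProduct.rid A C) ((m.lTensor C) t) = 0 := by
      simp only [hts, map_add, LinearMap.lTensor_tmul, TensorProduct.rid_tmul]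
      simp only [hm, LinearMap.coprod_apply, smul_eq_mul, LinearMap.smul_apply,
        LinearMap.id_coe, id_eq, mul_one, mul_zero, add_zero, zero_add, hsmul]
      rw [ha, hb]; ring
    exact ((TensorProduct.rid A C).map_eq_zero_iff).mp this
  obtain ⟨s, hs⟩ := (hexactC t).mp ht
  set c : C := (TensorProduct.rid A C) s with hcs
  have hsc : s = c ⊗ₜ (1 : A) := by
    apply (TensorProduct.rid A C).injective
    simp [hcs, TensorProduct.rid_tmul]
  have hts' : t = c ⊗ₜ (g, -f) := by
    rw [← hs, hsc, LinearMap.lTensor_tmul]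
    congr 1
    simp [hk]
  -- extract the two components
  have hcomp := congrArg (TensorProduct.prodRight A A C A A) hts'
  simp only [hts, map_add, TensorProduct.prodRight_tmul] at hcomp
  have h1 : b = φ g * c := by
    have := congrArg Prod.fst hcomp
    simp only [Prod.fst_add] at this
    have := congrArg (TensorProduct.rid A C) this
    simp only [map_add, TensorProduct.rid_tmul, hsmul] at this
    simpa [mul_comm] using this
  have h2 : a = φ f * c := by
    have := congrArg Prod.snd hcomp
    simp only [Prod.snd_add] at this
    have := congrArg (TensorProduct.rid A C) this
    simp only [map_add, TensorProduct.rid_tmul, hsmul] at this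
    have h' : -a = φ (-f) * c := by
      simpa using this
    rw [map_neg, neg_mul] at h'
    linear_combination -h'
  have hone : φ f * (1 - d * c) = 0 := by
    have h' : φ f = d * (φ f * c) := by rw [← h2, ha]
    linear_combination h'
  have : d * c = 1 := by
    rcases mul_eq_zero.mp hone with h | h
    · exact absurd h hφf
    · linear_combination -h
  exact IsUnit.of_mul_eq_one (a := d) c this
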